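/- arXiv:2103.06555 — 4 statements merged into one kernel-verified Lean document; each statement's English description precedes it below -/
import Mathlib

section
/- Let 𝒜 be an abelian category and let f : X ⟶ Y be a morphism in 𝒜. Then the pushout of f along itself (the cokernel pair of f) is isomorphic to the biproduct Y ⊕ coker(f). In symbols: pushout f f ≅ Y ⊞ cokernel f. -/
open CategoryTheory CategoryTheory.Limits

/-- In an abelian category, the pushout of a morphism `f : X ⟶ Y` along itself
(the cokernel pair of `f`) is isomorphic to the biproduct `Y ⊞ cokernel f`. -/
theorem pushout_self_iso_biprod_cokernel {𝒜 : Type*} [Category 𝒜] [Abelian 𝒜]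
    {X Y : 𝒜} (f : X ⟶ Y) :
    Nonempty (pushout f f ≅ Y ⊞ cokernel f) := by
  refine ⟨{
    hom := pushout.desc biprod.inl (biprod.inl + cokernel.π f ≫ biprod.inr) (by simp)
    inv := biprod.desc (pushout.inl f f)
      (cokernel.desc f (pushout.inr f f - pushout.inl f f) (by simp [pushout.condition]))
    hom_inv_id := ?_
    inv_hom_id := ?_ }⟩
  · apply pushout.hom_ext <;> simp [pushout.inl_desc_assoc, pushout.inr_desc_assoc]
  · apply biprod.hom_ext' <;> [skip; apply coequalizer.hom_ext] <;>
      simp [Preadditive.sub_comp, Preadditive.add_comp, pushout.inl_desc, pushout.inr_desc]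
end

section
/- Let R be a commutative ring, let f : M → N be an R-linear map of R-modules, and let n be a natural number. Define the R-linear map g : M^n → N^{n+1} whose j-th component (0 ≤ j ≤ n) sends (x_1, …, x_n) to f(x_{j+1}) − f(x_j), with the convention x_0 = x_{n+1} = 0 (so each x_i contributes +f(x_i) in slot i−1 and −f(x_i) in slot i). Then the cokernel of g is isomorphic, as an R-module, to N × (N ⧸ range f)^n. -/
open Fin.NatCast

/-- For an `R`-linear map `f : M → N` and `n : ℕ`, let `g : Mⁿ → Nⁿ⁺¹` be the map whose
`j`-th component (`0 ≤ j ≤ n`) sends `(x₁, …, xₙ)` to `f (x_{j+1}) - f (x_j)`, with the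
convention `x₀ = x_{n+1} = 0`.  (Below, `P i` is the extension-by-zero projection sending
`x` to its `i`-th entry in the `1`-based indexing `x₁, …, xₙ`.)  Then the cokernel of `g`
is isomorphic, as an `R`-module, to `N × (N ⧸ range f)ⁿ`. -/
theorem cokernel_cech_conerve_map (R : Type*) [CommRing R]
    (M N : Type*) [AddCommGroup M] [Module R M] [AddCommGroup N] [Module R N]
    (f : M →ₗ[R] N) (n : ℕ)
    (P : ℕ → ((Fin n → M) →ₗ[R] M))
    (hP : ∀ i : ℕ, P i = if h : 1 ≤ i ∧ i ≤ n
      then LinearMap.proj (⟨i - 1, by omega⟩ : Fin n) else 0)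
    (g : (Fin n → M) →ₗ[R] (Fin (n + 1) → N))
    (hg : g = LinearMap.pi fun j : Fin (n + 1) =>
      f ∘ₗ P ((j : ℕ) + 1) - f ∘ₗ P (j : ℕ)) :
    Nonempty (((Fin (n + 1) → N) ⧸ LinearMap.range g) ≃ₗ[R]
      N × (Fin n → N ⧸ LinearMap.range f)) := by
  classical
  -- partial sum linear maps
  set S : Fin n → ((Fin (n + 1) → N) →ₗ[R] N) :=
    fun j => ∑ i ∈ Finset.range ((j : ℕ) + 1),
      LinearMap.proj (R := R) (φ := fun _ : Fin (n+1) => N) ((i : Fin (n + 1))) with hS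
  set A : (Fin (n + 1) → N) →ₗ[R] N :=
    ∑ i : Fin (n + 1), LinearMap.proj (R := R) (φ := fun _ : Fin (n+1) => N) i with hA
  set φ : (Fin (n + 1) → N) →ₗ[R] N × (Fin n → N ⧸ LinearMap.range f) :=
    LinearMap.prod A (LinearMap.pi fun j : Fin n => (LinearMap.range f).mkQ ∘ₗ S j) with hφ
  have hSapp : ∀ (j : Fin n) (y : Fin (n + 1) → N),
      S j y = ∑ i ∈ Finset.range ((j : ℕ) + 1), y (i : Fin (n + 1)) := by
    intro j y; simp [hS]
  have hAapp : ∀ y : Fin (n + 1) → N,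
      A y = ∑ i ∈ Finset.range (n + 1), y (i : Fin (n + 1)) := by
    intro y
    simp only [hA, LinearMap.sum_apply, LinearMap.proj_apply]
    rw [Finset.sum_range fun i => y (i : Fin (n+1))]
    congr 1; ext i; congr 1
    exact (Fin.cast_val_eq_self i).symm
  have hcast : ∀ i : ℕ, i < n + 1 → ((i : Fin (n + 1)) : ℕ) = i := fun i h =>
    Fin.val_cast_of_lt h
  have hker : LinearMap.ker φ = LinearMap.range g := by
    ext y
    simp only [LinearMap.mem_ker, hφ, LinearMap.prod_apply, LinearMap.pi_apply, Function.prod,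
      Prod.mk_eq_zero, funext_iff, Pi.zero_apply, LinearMap.comp_apply, Submodule.mkQ_apply,
      Submodule.Quotient.mk_eq_zero, LinearMap.mem_range]
    constructor
    · rintro ⟨h0, h1⟩
      choose x hx using h1
      refine ⟨x, ?_⟩
      -- f (P k x) = partial sums
      have key : ∀ k : ℕ, k ≤ n + 1 → f (P k x) = ∑ i ∈ Finset.range k, y (i : Fin (n + 1)) := by
        intro k hk
        rcases Nat.eq_zero_or_pos k with rfl | hk1
        · simp [hP 0]
        rcases Nat.lt_or_ge k (n + 1) with hkn | hkn
        · have hkn' : k ≤ n := by omega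
          rw [hP k, dif_pos ⟨hk1, hkn'⟩]
          have := hx ⟨k - 1, by omega⟩
          rw [hSapp] at this
          simp only [LinearMap.proj_apply]
          rw [this, show (((⟨k - 1, by omega⟩ : Fin n) : ℕ) + 1) = k from
            Nat.succ_pred_eq_of_pos hk1]
        · have hk' : k = n + 1 := by omega
          subst hk'
          rw [hP (n + 1), dif_neg (by omega)]
          rw [hAapp] at h0
          simp [h0]
      intro j
      rw [hg]
      simp only [LinearMap.pi_apply, LinearMap.sub_apply, LinearMap.comp_apply]
      rw [key ((j : ℕ) + 1) (by omega), key (j : ℕ) (by omega),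
        Finset.sum_range_succ, add_sub_cancel_left, Fin.cast_val_eq_self]
    · rintro ⟨x, hxy⟩
      have hy : y = g x := funext fun j => (hxy j).symm
      subst hy
      have key : ∀ k : ℕ, k ≤ n + 1 →
          ∑ i ∈ Finset.range k, g x (i : Fin (n + 1)) = f (P k x) - f (P 0 x) := by
        intro k hk
        have : ∀ i ∈ Finset.range k, g x (i : Fin (n + 1)) =
            (fun m => f (P m x)) (i + 1) - (fun m => f (P m x)) i := by
          intro i hi
          have hi' : i < n + 1 := by simp at hi; omega
          rw [hg]
          simp only [LinearMap.pi_apply, LinearMap.sub_apply, LinearMap.comp_apply,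
            hcast i hi']
        rw [Finset.sum_congr rfl this, Finset.sum_range_sub (fun m => f (P m x))]
      have hP0 : f (P 0 x) = 0 := by rw [hP 0, dif_neg (by omega)]; simp
      constructor
      · rw [hAapp, key (n + 1) le_rfl, hP0, hP (n + 1), dif_neg (by omega)]
        simp
      · intro j
        rw [hSapp, key ((j : ℕ) + 1) (by omega), hP0, sub_zero,
          hP ((j : ℕ) + 1), dif_pos ⟨by omega, by omega⟩]
        exact ⟨_, rfl⟩
  have hsurj : Function.Surjective φ := by
    rintro ⟨a, c⟩
    choose r hr using fun j : Fin n => Submodule.Quotient.mk_surjective (LinearMap.range f) (c j)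
    set RR : ℕ → N := fun k => if k = 0 then 0 else if h : k - 1 < n then r ⟨k - 1, h⟩ else a
      with hRR
    refine ⟨fun j => RR ((j : ℕ) + 1) - RR (j : ℕ), ?_⟩
    have hsum : ∀ k : ℕ, k ≤ n + 1 →
        ∑ i ∈ Finset.range k,
          (fun j : Fin (n+1) => RR ((j : ℕ) + 1) - RR (j : ℕ)) (i : Fin (n + 1)) = RR k := by
      intro k hk
      have : ∀ i ∈ Finset.range k,
          (fun j : Fin (n+1) => RR ((j : ℕ) + 1) - RR (j : ℕ)) (i : Fin (n + 1)) =
          RR (i + 1) - RR i := by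
        intro i hi
        have hi' : i < n + 1 := by simp at hi; omega
        simp only [hcast i hi']
      rw [Finset.sum_congr rfl this, Finset.sum_range_sub RR]
      simp [hRR]
    have h1 : φ (fun j => RR ((j : ℕ) + 1) - RR (j : ℕ)) =
        (A fun j => RR ((j : ℕ) + 1) - RR (j : ℕ),
         fun j : Fin n => Submodule.Quotient.mk (S j fun j' => RR ((j' : ℕ) + 1) - RR (j' : ℕ))) :=
      rfl
    rw [h1]
    refine Prod.ext ?_ ?_
    · show A _ = a
      rw [hAapp, hsum (n + 1) le_rfl]
      simp [hRR]
    · show _ = c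
      funext j
      show Submodule.Quotient.mk (S j fun j' => RR ((j' : ℕ) + 1) - RR (j' : ℕ)) = c j
      rw [hSapp, hsum ((j : ℕ) + 1) (by omega)]
      have : RR ((j : ℕ) + 1) = r j := by
        simp only [hRR, Nat.add_sub_cancel]
        rw [if_neg (by omega), dif_pos j.isLt]
      rw [this, hr j]
  exact ⟨(Submodule.quotEquivOfEq _ _ hker.symm).trans (φ.quotKerEquivOfSurjective hsurj)⟩
end

section
/- Let R be a commutative ring and let f : E ⟶ F be a morphism of ℤ-indexed cochain complexes of R-modules. Let (f, −f) : E ⟶ F ⊕ F denote the morphism with components f and −f into the biproduct complex F ⊕ F. Then the mapping cone of (f, −f) is isomorphic, in the homotopy category of cochain complexes of R-modules, to the biproduct F ⊕ Cone(f) of F with the mapping cone of f. -/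
open CategoryTheory CategoryTheory.Limits CochainComplex CochainComplex.HomComplex

namespace ConeAux

variable {C : Type*} [Category C] [Preadditive C] [HasBinaryBiproducts C]

lemma map_eq_id {K L : CochainComplex C ℤ} (φ : K ⟶ L)
    (a : K ⟶ K) (b : L ⟶ L) (comm : φ ≫ b = a ≫ φ) (ha : a = 𝟙 K) (hb : b = 𝟙 L) :
    mappingCone.map φ φ a b comm = 𝟙 _ := by
  subst ha hb; exact mappingCone.map_id φ

variable {E F : CochainComplex C ℤ} (f : E ⟶ F)

noncomputable def e1 : mappingCone (biprod.lift f (-f)) ≅ mappingCone (biprod.lift f (0 : E ⟶ F)) where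
  hom := mappingCone.map _ _ (𝟙 E) (biprod.lift biprod.fst (biprod.fst + biprod.snd))
    (by apply biprod.hom_ext <;> simp)
  inv := mappingCone.map _ _ (𝟙 E) (biprod.lift biprod.fst (biprod.snd - biprod.fst))
    (by apply biprod.hom_ext <;> simp)
  hom_inv_id := by
    rw [← mappingCone.map_comp]
    exact map_eq_id _ _ _ _ (by simp) (by apply biprod.hom_ext <;> simp)
  inv_hom_id := by
    rw [← mappingCone.map_comp]
    exact map_eq_id _ _ _ _ (by simp) (by apply biprod.hom_ext <;> simp)

end ConeAux

namespace ConeAux2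
open HomComplex mappingCone
variable {C : Type*} [Category C] [Preadditive C] [HasBinaryBiproducts C]
variable {E F : CochainComplex C ℤ} (f : E ⟶ F)

noncomputable def u : mappingCone (biprod.lift f (0 : E ⟶ F)) ⟶ F ⊞ mappingCone f :=
  mappingCone.desc _
    ((mappingCone.inl f).comp
      (Cochain.ofHom (biprod.inr : mappingCone f ⟶ F ⊞ mappingCone f)) (add_zero _))
    (biprod.lift biprod.snd (biprod.fst ≫ mappingCone.inr f))
    (by
      rw [δ_comp_ofHom, δ_inl, ← Cochain.ofHom_comp]
      exact congrArg Cochain.ofHom (by apply biprod.hom_ext <;> simp))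

noncomputable def vmap : mappingCone f ⟶ mappingCone (biprod.lift f (0 : E ⟶ F)) :=
  mappingCone.map f _ (𝟙 E) biprod.inl (by apply biprod.hom_ext <;> simp)

noncomputable def v : F ⊞ mappingCone f ⟶ mappingCone (biprod.lift f (0 : E ⟶ F)) :=
  biprod.desc ((biprod.inr : F ⟶ F ⊞ F) ≫ mappingCone.inr _) (vmap f)

lemma inr_vmap : mappingCone.inr f ≫ vmap f =
    biprod.inl ≫ mappingCone.inr (biprod.lift f (0 : E ⟶ F)) := by
  rw [vmap, mappingCone.map_eq_mapOfHomotopy]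
  exact CochainComplex.mappingCone.triangleMapOfHomotopy_comm₂ _

lemma vmap_u : vmap f ≫ u f = biprod.inr := by
  have h3 : mappingCone.inr f ≫ (vmap f ≫ u f) = mappingCone.inr f ≫ biprod.inr := by
    rw [← Category.assoc, inr_vmap, Category.assoc, u, mappingCone.inr_desc]
    apply biprod.hom_ext <;> simp
  refine HomologicalComplex.hom_ext _ _ (fun n => ?_)
  rw [mappingCone.ext_from_iff _ (n+1) n rfl]
  constructor
  · simp [u, vmap, mappingCone.map]
  · simpa using congr_arg (fun g => HomologicalComplex.Hom.f g n) h3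

lemma u_v : u f ≫ v f = 𝟙 _ := by
  have hβ : biprod.lift biprod.snd (biprod.fst ≫ mappingCone.inr f) ≫ v f =
      mappingCone.inr (biprod.lift f (0 : E ⟶ F)) := by
    rw [v, biprod.lift_desc, Category.assoc, inr_vmap]
    apply biprod.hom_ext' <;> simp
  ext n
  rw [mappingCone.ext_from_iff _ (n+1) n rfl]
  constructor
  · simp [u, v, vmap, mappingCone.map]
  · simp only [HomologicalComplex.comp_f, u, mappingCone.inr_f_desc_f_assoc]
    rw [← HomologicalComplex.comp_f, hβ]
    simp

lemma v_u : v f ≫ u f = 𝟙 _ := by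
  apply biprod.hom_ext'
  · rw [v, biprod.inl_desc_assoc, Category.assoc, u, mappingCone.inr_desc]
    apply biprod.hom_ext <;> simp
  · rw [v, biprod.inr_desc_assoc, vmap_u]
    simp

noncomputable def e2 : mappingCone (biprod.lift f (0 : E ⟶ F)) ≅ F ⊞ mappingCone f :=
  ⟨u f, v f, u_v f, v_u f⟩

end ConeAux2

/-- For a morphism `f : E ⟶ F` of `ℤ`-indexed cochain complexes of `R`-modules, the mapping
cone of the morphism `(f, -f) : E ⟶ F ⊞ F` is isomorphic, in the homotopy category, to the
biproduct `F ⊞ Cone(f)` of `F` with the mapping cone of `f`. -/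
theorem mappingCone_lift_f_neg_f_iso (R : Type*) [CommRing R]
    {E F : CochainComplex (ModuleCat R) ℤ} (f : E ⟶ F) :
    Nonempty
      ((HomotopyCategory.quotient (ModuleCat R) (ComplexShape.up ℤ)).obj
          (CochainComplex.mappingCone (biprod.lift f (-f))) ≅
        (HomotopyCategory.quotient (ModuleCat R) (ComplexShape.up ℤ)).obj
          (F ⊞ CochainComplex.mappingCone f)) := by
  exact ⟨(HomotopyCategory.quotient (ModuleCat R) (ComplexShape.up ℤ)).mapIso
    (ConeAux.e1 f ≪≫ ConeAux2.e2 f)⟩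
end

section
/- Let k be a nontrivial commutative ring and consider the polynomial ring k[u, v] in two variables (i.e. MvPolynomial over the index set Fin 2), equipped with the ℤ-valued weight function assigning weight −2 to u and weight 2 to v. Then a polynomial p ∈ k[u, v] is weighted homogeneous of weighted degree 0 if and only if p lies in the k-span of the family {(uv)^n : n ∈ ℕ}; moreover this family is linearly independent over k, so the weighted-degree-0 homogeneous component of k[u, v] is a free k-module with basis {(uv)^n : n ∈ ℕ} (in particular it is a countable direct sum ⊕_ℕ k, not a product). -/
open MvPolynomial

theorem uv_pow_eq_monomial (k : Type*) [CommRing k] (n : ℕ) :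
    (X 0 * X 1 : MvPolynomial (Fin 2) k) ^ n
      = monomial (Finsupp.single 0 n + Finsupp.single 1 n) 1 := by
  rw [mul_pow, X_pow_eq_monomial, X_pow_eq_monomial, monomial_mul, one_mul]

theorem uv_pow_isWeightedHomogeneous (k : Type*) [CommRing k] (n : ℕ) :
    (X 0 * X 1 : MvPolynomial (Fin 2) k) ^ n |>.IsWeightedHomogeneous (![(-2 : ℤ), 2]) 0 := by
  induction n with
  | zero => simpa using isWeightedHomogeneous_one k _
  | succ m ih =>
      have h01 : ((X 0 * X 1 : MvPolynomial (Fin 2) k)).IsWeightedHomogeneous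
          (![(-2 : ℤ), 2]) 0 := by
        have := (isWeightedHomogeneous_X k (![(-2 : ℤ), 2]) 0).mul
          (isWeightedHomogeneous_X k (![(-2 : ℤ), 2]) 1)
        simpa using this
      have := ih.mul h01
      simpa [pow_succ] using this

/-- Consider `k[u, v] = MvPolynomial (Fin 2) k` over a nontrivial commutative ring `k`,
with the `ℤ`-valued weight assigning weight `-2` to `u = X 0` and weight `2` to `v = X 1`.
Then a polynomial `p` is weighted homogeneous of weighted degree `0` if and only if it lies
in the `k`-span of the family `{(uv)^n : n ∈ ℕ}`; moreover this family is linearly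
independent over `k`.  In particular, the weighted-degree-`0` homogeneous component of
`k[u, v]` is a free `k`-module with basis `{(uv)^n : n ∈ ℕ}`, a countable direct sum
`⊕_ℕ k` rather than a product. -/
theorem weightedHomogeneous_degree_zero_span_uv_pows
    (k : Type*) [CommRing k] [Nontrivial k] :
    (∀ p : MvPolynomial (Fin 2) k,
        p.IsWeightedHomogeneous (![(-2 : ℤ), 2]) 0 ↔
          p ∈ Submodule.span k
            (Set.range fun n : ℕ => (X 0 * X 1 : MvPolynomial (Fin 2) k) ^ n)) ∧
      LinearIndependent k (fun n : ℕ => (X 0 * X 1 : MvPolynomial (Fin 2) k) ^ n) := by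
  constructor
  · intro p
    constructor
    · intro hp
      rw [p.as_sum]
      apply Submodule.sum_mem
      intro d hd
      have hd0 : Finsupp.weight (![(-2 : ℤ), 2]) d = 0 := hp (mem_support_iff.mp hd)
      rw [Finsupp.weight_apply, Finsupp.sum_fintype _ _ (by intro i; simp)] at hd0
      simp only [Fin.sum_univ_two, Matrix.cons_val_zero, Matrix.cons_val_one, Matrix.head_cons,
        smul_eq_mul, nsmul_eq_mul] at hd0
      have heq : d 1 = d 0 := by omega
      have hdd : d = Finsupp.single 0 (d 0) + Finsupp.single 1 (d 0) := by
        ext i; fin_cases i <;> simp [heq]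
      have hmono : monomial d (coeff d p)
          = coeff d p • (X 0 * X 1 : MvPolynomial (Fin 2) k) ^ (d 0) := by
        rw [uv_pow_eq_monomial, smul_monomial, smul_eq_mul, mul_one, ← hdd]
      rw [hmono]
      exact Submodule.smul_mem _ _ (Submodule.subset_span ⟨d 0, rfl⟩)
    · intro hp
      have hle : Submodule.span k
            (Set.range fun n : ℕ => (X 0 * X 1 : MvPolynomial (Fin 2) k) ^ n)
          ≤ weightedHomogeneousSubmodule k (![(-2 : ℤ), 2]) 0 := by
        rw [Submodule.span_le]
        rintro _ ⟨n, rfl⟩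
        exact uv_pow_isWeightedHomogeneous k n
      exact hle hp
  · have hinj : Function.Injective
        (fun n : ℕ => (Finsupp.single (0 : Fin 2) n + Finsupp.single 1 n)) := by
      intro a b h
      have := DFunLike.congr_fun h (1 : Fin 2)
      simpa using this
    have := ((basisMonomials (Fin 2) k).linearIndependent).comp _ hinj
    convert this using 1
    swap
    · rfl
    funext n
    rw [uv_pow_eq_monomial]
    simp [coe_basisMonomials]
end
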